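/- For fixed $c > 1$, the function $f_c : (1, +\infty) \to \mathbb{R}$ defined by $f_c(p) = \frac{c^p - 1}{p} \cdot \frac{p-1}{c^{p-1} - 1}$ is increasing. -/

import Mathlib

open Real Set

private noncomputable def auxh (c : ℝ) : ℝ → ℝ := fun y => Real.log (c ^ y - 1) - Real.log y

private lemma aux_one_lt {c : ℝ} (hc : 1 < c) {x : ℝ} (hx : 0 < x) : 1 < c ^ x :=
  (Real.one_lt_rpow_iff_of_pos (lt_trans one_pos hc)).mpr (Or.inl ⟨hc, hx⟩)

private lemma aux_hasDerivAt_h {c : ℝ} (hc : 1 < c) {x : ℝ} (hx : 0 < x) :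
    HasDerivAt (auxh c) (c ^ x * Real.log c / (c ^ x - 1) - x⁻¹) x := by
  have hc0 : (0:ℝ) < c := lt_trans one_pos hc
  have h1 : 1 < c ^ x := aux_one_lt hc hx
  have hA : HasDerivAt (fun y : ℝ => c ^ y - 1) (c ^ x * Real.log c) x :=
    ((Real.hasStrictDerivAt_const_rpow hc0 x).hasDerivAt).sub_const 1
  exact (hA.log (by simp; linarith)).sub (Real.hasDerivAt_log hx.ne')

private lemma aux_hasDerivAt_phi {c : ℝ} (hc : 1 < c) {x : ℝ} (hx : 0 < x) :
    HasDerivAt (fun y : ℝ => c ^ y * Real.log c / (c ^ y - 1) - y⁻¹)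
      ((x ^ 2)⁻¹ - (Real.log c) ^ 2 * c ^ x / (c ^ x - 1) ^ 2) x := by
  have hc0 : (0:ℝ) < c := lt_trans one_pos hc
  have h1 : 1 < c ^ x := aux_one_lt hc hx
  have hne : c ^ x - 1 ≠ 0 := by linarith
  have hA : HasDerivAt (fun y : ℝ => c ^ y) (c ^ x * Real.log c) x :=
    (Real.hasStrictDerivAt_const_rpow hc0 x).hasDerivAt
  have hq := (hA.mul_const (Real.log c)).div (hA.sub_const 1) hne
  have hi : HasDerivAt (fun y : ℝ => y⁻¹) (-(x ^ 2)⁻¹) x := hasDerivAt_inv hx.ne'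
  convert hq.sub hi using 1
  case e'_4 => rfl
  case e'_5 => rfl
  case e'_8 => rfl
  have hx2 : (x:ℝ) ^ 2 ≠ 0 := by positivity
  field_simp
  ring

private lemma aux_psi_nonneg {c : ℝ} (hc : 1 < c) {x : ℝ} (hx : 0 < x) :
    0 ≤ (x ^ 2)⁻¹ - (Real.log c) ^ 2 * c ^ x / (c ^ x - 1) ^ 2 := by
  have hc0 : (0:ℝ) < c := lt_trans one_pos hc
  have hL : 0 < Real.log c := Real.log_pos hc
  set u := Real.log c * x with hu
  have hu0 : 0 < u := mul_pos hL hx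
  have hcx : c ^ x = Real.exp u := Real.rpow_def_of_pos hc0 x
  have he1 : 1 < Real.exp u := by
    rw [← Real.exp_zero]; exact Real.exp_lt_exp.mpr hu0
  have hkey : u ^ 2 * Real.exp u ≤ (Real.exp u - 1) ^ 2 := by
    have hs : u / 2 < Real.sinh (u / 2) := Real.self_lt_sinh_iff.mpr (by linarith)
    rw [Real.sinh_eq] at hs
    have e1 : Real.exp (u / 2) * Real.exp (-(u / 2)) = 1 := by
      rw [← Real.exp_add]; simp
    have e2 : Real.exp (u / 2) * Real.exp (u / 2) = Real.exp u := by
      rw [← Real.exp_add]; ring_nf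
    have hp : 0 < Real.exp (u / 2) := Real.exp_pos _
    have hp' : 0 < Real.exp (-(u / 2)) := Real.exp_pos _
    have h5 : Real.exp u - 1
        = Real.exp (u / 2) * (Real.exp (u / 2) - Real.exp (-(u / 2))) := by
      rw [mul_sub, e2, e1]
    have h6 : u ^ 2 ≤ (Real.exp (u / 2) - Real.exp (-(u / 2))) ^ 2 := by nlinarith
    calc u ^ 2 * Real.exp u
        ≤ (Real.exp (u / 2) - Real.exp (-(u / 2))) ^ 2 * Real.exp u :=
          mul_le_mul_of_nonneg_right h6 (Real.exp_pos u).le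
      _ = (Real.exp u - 1) ^ 2 := by rw [h5, ← e2]; ring
  rw [hcx, sub_nonneg, div_le_iff₀ (pow_pos (by linarith : (0:ℝ) < Real.exp u - 1) 2),
    inv_mul_eq_div, le_div_iff₀ (by positivity : (0:ℝ) < x ^ 2)]
  calc Real.log c ^ 2 * Real.exp u * x ^ 2 = u ^ 2 * Real.exp u := by rw [hu]; ring
    _ ≤ (Real.exp u - 1) ^ 2 := hkey

private lemma aux_convex {c : ℝ} (hc : 1 < c) : ConvexOn ℝ (Set.Ioi (0:ℝ)) (auxh c) := by
  have hint : interior (Set.Ioi (0:ℝ)) = Set.Ioi 0 := isOpen_Ioi.interior_eq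
  have hφmono : MonotoneOn (fun y : ℝ => c ^ y * Real.log c / (c ^ y - 1) - y⁻¹) (Set.Ioi 0) := by
    apply monotoneOn_of_deriv_nonneg (convex_Ioi 0)
    · exact fun x hx => (aux_hasDerivAt_phi hc hx).continuousAt.continuousWithinAt
    · rw [hint]
      exact fun x hx => (aux_hasDerivAt_phi hc hx).differentiableAt.differentiableWithinAt
    · rw [hint]
      intro x hx
      rw [(aux_hasDerivAt_phi hc hx).deriv]
      exact aux_psi_nonneg hc hx
  apply MonotoneOn.convexOn_of_deriv (convex_Ioi 0)
  · exact fun x hx => (aux_hasDerivAt_h hc hx).continuousAt.continuousWithinAt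
  · rw [hint]
    exact fun x hx => (aux_hasDerivAt_h hc hx).differentiableAt.differentiableWithinAt
  · rw [hint]
    intro a ha b hb hab
    rw [(aux_hasDerivAt_h hc ha).deriv, (aux_hasDerivAt_h hc hb).deriv]
    exact hφmono ha hb hab

private lemma auxf_eq {c : ℝ} (hc : 1 < c) {p : ℝ} (hp : 1 < p) :
    (c ^ p - 1) / p * ((p - 1) / (c ^ (p - 1) - 1)) = Real.exp (auxh c p - auxh c (p - 1)) := by
  have hc0 : (0:ℝ) < c := lt_trans one_pos hc
  have h1 : 1 < c ^ p := aux_one_lt hc (by linarith)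
  have h2 : 1 < c ^ (p - 1) := aux_one_lt hc (by linarith)
  have hp0 : (0:ℝ) < p := by linarith
  have hp1 : (0:ℝ) < p - 1 := by linarith
  simp only [auxh]
  rw [show Real.log (c ^ p - 1) - Real.log p - (Real.log (c ^ (p - 1) - 1) - Real.log (p - 1))
      = Real.log (c ^ p - 1) + Real.log (p - 1) - (Real.log p + Real.log (c ^ (p - 1) - 1)) by
        ring]
  rw [Real.exp_sub, Real.exp_add, Real.exp_add, Real.exp_log (by linarith), Real.exp_log hp1,
    Real.exp_log hp0, Real.exp_log (by linarith)]
  field_simp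

theorem stmt_4 (c : ℝ) (hc : 1 < c) :
    MonotoneOn (fun p : ℝ => (c ^ p - 1) / p * ((p - 1) / (c ^ (p - 1) - 1)))
      (Set.Ioi 1) := by
  have hconv := aux_convex hc
  intro p hp q hq hpq
  simp only [Set.mem_Ioi] at hp hq
  have hs1 := hconv.secant_mono (a := p - 1) (x := p) (y := q)
    (Set.mem_Ioi.mpr (by linarith)) (Set.mem_Ioi.mpr (by linarith))
    (Set.mem_Ioi.mpr (by linarith)) (by intro h; linarith [h]) (by intro h; linarith [h]) hpq
  have hs2 := hconv.secant_mono (a := q) (x := p - 1) (y := q - 1)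
    (Set.mem_Ioi.mpr (by linarith)) (Set.mem_Ioi.mpr (by linarith))
    (Set.mem_Ioi.mpr (by linarith)) (by intro h; linarith [h]) (by intro h; linarith [h])
    (by linarith)
  have e1 : p - (p - 1) = 1 := by ring
  rw [e1, div_one] at hs1
  have e3 : (auxh c (p - 1) - auxh c q) / (p - 1 - q)
      = (auxh c q - auxh c (p - 1)) / (q - (p - 1)) := by
    rw [← neg_div_neg_eq, neg_sub, neg_sub]
  have e4 : (auxh c (q - 1) - auxh c q) / (q - 1 - q) = auxh c q - auxh c (q - 1) := by
    rw [show q - 1 - q = (-1 : ℝ) by ring, div_neg, div_one, neg_sub]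
  rw [e3, e4] at hs2
  have key : auxh c p - auxh c (p - 1) ≤ auxh c q - auxh c (q - 1) := le_trans hs1 hs2
  show (c ^ p - 1) / p * ((p - 1) / (c ^ (p - 1) - 1))
      ≤ (c ^ q - 1) / q * ((q - 1) / (c ^ (q - 1) - 1))
  rw [auxf_eq hc hp, auxf_eq hc hq]
  exact Real.exp_le_exp.mpr key
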